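/- Let K ≥ 1 be an integer and consider the (K+1)×(K+1) symmetric matrix B with B_{ii} = K/(K+1) for 1 ≤ i ≤ K, B_{K+1,K+1} = (K+2)/(K+1), B_{i,K+1} = B_{K+1,i} = 1/(K+1) for 1 ≤ i ≤ K, and B_{ij} = 0 otherwise. Then the eigenvalues of B are K/(K+1) with multiplicity K-1, 1 - 1/√(K+1), and 1 + 1/√(K+1). -/

import Mathlib

open Polynomial

set_option maxHeartbeats 1000000
set_option synthInstance.maxHeartbeats 400000

theorem B_charpoly (K : ℕ) (hK : 1 ≤ K)
    (B : Matrix (Fin (K + 1)) (Fin (K + 1)) ℝ)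
    (hB : ∀ i j : Fin (K + 1), B i j =
      if i = j then (if (i : ℕ) < K then (K : ℝ) / (K + 1) else ((K : ℝ) + 2) / (K + 1))
      else if ((i : ℕ) < K ∧ (j : ℕ) = K) ∨ ((i : ℕ) = K ∧ (j : ℕ) < K) then 1 / ((K : ℝ) + 1)
      else 0) :
    B.charpoly = (X - C ((K : ℝ) / (K + 1))) ^ (K - 1) *
      (X - C (1 - 1 / Real.sqrt (K + 1))) * (X - C (1 + 1 / Real.sqrt (K + 1))) := by
  classical
  set a : ℝ := (K : ℝ) / (K + 1) with ha
  set b : ℝ := ((K : ℝ) + 2) / (K + 1) with hb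
  set s : ℝ := 1 / ((K : ℝ) + 1) with hs
  set r₁ : ℝ := 1 - 1 / Real.sqrt (K + 1) with hr₁
  set r₂ : ℝ := 1 + 1 / Real.sqrt (K + 1) with hr₂
  have hKpos : (0 : ℝ) < (K : ℝ) + 1 := by positivity
  have hKne : ((K : ℝ) + 1) ≠ 0 := ne_of_gt hKpos
  have hsqrt : Real.sqrt ((K : ℝ) + 1) ^ 2 = (K : ℝ) + 1 := Real.sq_sqrt (by positivity)
  have hsqrtne : Real.sqrt ((K : ℝ) + 1) ≠ 0 := by
    intro h
    rw [h] at hsqrt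
    simp at hsqrt
    linarith
  -- real identities
  have h1 : a + b = r₁ + r₂ := by
    rw [ha, hb, hr₁, hr₂]
    field_simp
    ring
  have h2 : a * b - (K : ℝ) * s ^ 2 = r₁ * r₂ := by
    rw [ha, hb, hs, hr₁, hr₂]
    field_simp
    linear_combination (-(((K:ℝ)+1))^4 + (3*(K:ℝ)+6*(K:ℝ)^2+4*(K:ℝ)^3+(K:ℝ)^4)) * hsqrt
  -- polynomial identity
  have e1 : C a + C b = C r₁ + C r₂ := by rw [← C_add, ← C_add, h1]
  have e2 : C a * C b - C (K : ℝ) * C s ^ 2 = C r₁ * C r₂ := by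
    rw [← C_pow, ← C_mul, ← C_mul, ← C_sub, ← C_mul, h2]
  have key : (X - C a) * (X - C b) - C (K : ℝ) * C s ^ 2
      = (X - C r₁) * (X - C r₂) := by
    linear_combination e2 - (X : ℝ[X]) * e1
  -- move to the fraction field
  set φ : ℝ[X] →+* RatFunc ℝ := (algebraMap ℝ[X] (RatFunc ℝ) : ℝ[X] →+* RatFunc ℝ) with hφ
  have hinj : Function.Injective φ := IsFractionRing.injective ℝ[X] (RatFunc ℝ)
  apply hinj
  set y : RatFunc ℝ := φ (X - C a) with hy_def
  set y' : RatFunc ℝ := φ (X - C b) with hy'_def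
  set c : RatFunc ℝ := φ (C s) with hc_def
  have hy : y ≠ 0 := by
    rw [hy_def]
    exact (map_ne_zero_iff φ hinj).mpr (Polynomial.X_sub_C_ne_zero a)
  have keyF : y * y' - (K : RatFunc ℝ) * c ^ 2 = φ (X - C r₁) * φ (X - C r₂) := by
    rw [hy_def, hy'_def, hc_def, ← map_pow, ← map_natCast φ K, ← map_mul φ ((K : ℝ[X])),
      ← map_mul φ (X - C a), ← map_sub, ← map_mul φ (X - C r₁), ← Polynomial.C_eq_natCast, key]
  rw [Matrix.charpoly, RingHom.map_det, RingHom.mapMatrix_apply]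
  set N : Matrix (Fin K ⊕ Fin 1) (Fin K ⊕ Fin 1) (RatFunc ℝ) :=
    Matrix.fromBlocks (y • (1 : Matrix (Fin K) (Fin K) (RatFunc ℝ))) (Matrix.of fun _ _ => -c)
      (Matrix.of fun _ _ => -c) (Matrix.of fun _ _ => y') with hN_def
  have hsub : ((Matrix.charmatrix B).map φ).submatrix finSumFinEquiv finSumFinEquiv = N := by
    ext i j
    rcases i with i | i <;> rcases j with j | j
    · -- top-left block
      simp only [Matrix.submatrix_apply, finSumFinEquiv_apply_left, Matrix.map_apply, hN_def,
        Matrix.fromBlocks_apply₁₁, Matrix.fromBlocks, Matrix.of_apply, Sum.elim_inl, Matrix.smul_apply, Matrix.one_apply]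
      by_cases hij : i = j
      · subst hij
        rw [Matrix.charmatrix_apply_eq, hB]
        simp [i.isLt, hy_def, map_sub]
      · have h : Fin.castAdd 1 i ≠ Fin.castAdd 1 j := by
          simpa [Fin.ext_iff] using fun h => hij (Fin.ext h)
        rw [Matrix.charmatrix_apply_ne _ _ _ h, hB]
        have hj : (j : ℕ) ≠ K := Nat.ne_of_lt j.isLt
        have hi : (i : ℕ) ≠ K := Nat.ne_of_lt i.isLt
        simp [h, hij, hi, hj]
    · -- top-right block
      have h : Fin.castAdd 1 i ≠ Fin.natAdd K j := by
        simp only [ne_eq, Fin.ext_iff, Fin.coe_castAdd, Fin.coe_natAdd]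
        have := i.isLt
        omega
      simp only [Matrix.submatrix_apply, finSumFinEquiv_apply_left, finSumFinEquiv_apply_right,
        Matrix.map_apply, hN_def, Matrix.fromBlocks_apply₁₂, Matrix.fromBlocks, Matrix.of_apply,
          Sum.elim_inl, Sum.elim_inr]
      rw [Matrix.charmatrix_apply_ne _ _ _ h, hB]
      have hcond : ((Fin.castAdd 1 i : Fin (K+1)) : ℕ) < K
          ∧ ((Fin.natAdd K j : Fin (K+1)) : ℕ) = K := by
        simp [i.isLt, Fin.val_eq_zero j]
      simp [h, hcond, map_neg, hc_def]
    · -- bottom-left block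
      have h : Fin.natAdd K i ≠ Fin.castAdd 1 j := by
        simp only [ne_eq, Fin.ext_iff, Fin.coe_castAdd, Fin.coe_natAdd]
        have := j.isLt
        omega
      simp only [Matrix.submatrix_apply, finSumFinEquiv_apply_left, finSumFinEquiv_apply_right,
        Matrix.map_apply, hN_def, Matrix.fromBlocks_apply₂₁, Matrix.fromBlocks, Matrix.of_apply,
          Sum.elim_inl, Sum.elim_inr]
      rw [Matrix.charmatrix_apply_ne _ _ _ h, hB]
      have hcond : ((Fin.natAdd K i : Fin (K+1)) : ℕ) = K
          ∧ ((Fin.castAdd 1 j : Fin (K+1)) : ℕ) < K := by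
        simp [j.isLt, Fin.val_eq_zero i]
      simp [h, hcond, map_neg, hc_def]
    · -- bottom-right block
      have hij : i = j := Subsingleton.elim i j
      subst hij
      simp only [Matrix.submatrix_apply, finSumFinEquiv_apply_right, Matrix.map_apply, hN_def,
        Matrix.fromBlocks_apply₂₂, Matrix.fromBlocks, Matrix.of_apply, Sum.elim_inr]
      rw [Matrix.charmatrix_apply_eq, hB]
      simp [Fin.val_eq_zero i, hy'_def, map_sub]
  rw [← Matrix.det_submatrix_equiv_self finSumFinEquiv, hsub]
  -- compute the determinant of N
  haveI : Invertible y := invertibleOfNonzero hy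
  haveI instA : Invertible (y • (1 : Matrix (Fin K) (Fin K) (RatFunc ℝ))) :=
    ⟨⅟y • (1 : Matrix (Fin K) (Fin K) (RatFunc ℝ)), by
      rw [smul_mul_smul_comm, invOf_mul_self, one_mul, one_smul], by
      rw [smul_mul_smul_comm, mul_invOf_self, one_mul, one_smul]⟩
  have hInv : ⅟(y • (1 : Matrix (Fin K) (Fin K) (RatFunc ℝ)))
      = ⅟y • (1 : Matrix (Fin K) (Fin K) (RatFunc ℝ)) := invOf_eq_right_inv (by
        rw [smul_mul_smul_comm, mul_invOf_self, one_mul, one_smul])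
  rw [hN_def, Matrix.det_fromBlocks₁₁, hInv, Matrix.det_smul, Matrix.det_one, mul_one,
    Fintype.card_fin, Matrix.det_fin_one]
  simp only [Matrix.of_apply, Matrix.sub_apply, Matrix.mul_apply, Matrix.smul_apply, Matrix.one_apply,
    smul_eq_mul, mul_ite, mul_one, mul_zero, ite_mul, zero_mul, Finset.sum_ite_eq, Finset.sum_ite_eq',
    Finset.mem_univ, if_true, Finset.sum_const, Finset.card_univ, Fintype.card_fin,
    nsmul_eq_mul]
  have hpow : y ^ K = y ^ (K - 1) * y := by
    conv_lhs => rw [show K = K - 1 + 1 by omega]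
    rw [pow_succ]
  rw [map_mul, map_mul, map_pow, ← hy_def, hpow, mul_assoc]
  have hfinal : y * (y' - (K : RatFunc ℝ) * (-c * ⅟y * -c))
      = φ (X - C r₁) * φ (X - C r₂) := by
    rw [← keyF, invOf_eq_inv]
    field_simp
  rw [hfinal, mul_assoc]
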